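/- If τ is a permutation such that P(τ) contains no 231-chain, then P(τ) has a linear extension that avoids the pattern 231. -/

import Mathlib

namespace NC231

def Rel (s : Finset ℕ) (p : ℕ → ℕ) (x y : ℕ) : Prop :=
  x ∈ s ∧ y ∈ s ∧ p x < p y ∧
    (y < x ∨ ∃ z ∈ s, p x < p z ∧ p z < p y ∧ x < y ∧ y < z)

def NoChain (s : Finset ℕ) (p : ℕ → ℕ) : Prop :=
  ∀ u v w, Rel s p u v → Rel s p v w → ¬(w < u ∧ u < v)

def Valid (s : Finset ℕ) (p : ℕ → ℕ) (d c : ℕ) : Prop :=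
  (∀ u v, Rel s p v u → ¬(u ≤ c ∧ c < v)) ∧
  (∀ x y, x ∈ s → y ∈ s → ¬(d < x ∧ x ≤ c ∧ c < y))

structure Good (s : Finset ℕ) (p : ℕ → ℕ) (d : ℕ) (q : ℕ → ℕ) : Prop where
  inj : Set.InjOn q s
  ext : ∀ x y, Rel s p x y → q x < q y
  no231 : ∀ a b c, a ∈ s → b ∈ s → c ∈ s → q b < q c → q c < q a → a < b → b < c → False
  dprop : ∀ x y, x ∈ s → y ∈ s → d < x → x < y → q y < q x
  uprop : ∀ c, Valid s p d c → ∀ x y, x ∈ s → y ∈ s → x ≤ c → c < y → q x < q y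

theorem key (N : ℕ) : ∀ (s : Finset ℕ), s.card ≤ N → ∀ (p : ℕ → ℕ) (d : ℕ),
    Set.InjOn p s → NoChain s p →
    (∀ x y, Rel s p x y → ¬(d < x ∧ x < y)) → ∃ q, Good s p d q := by
  induction N with
  | zero =>
    intro s hcard p d _ _ _
    have hs : s = ∅ := Finset.card_eq_zero.1 (Nat.le_zero.1 hcard)
    subst hs
    exact ⟨id, ⟨fun a ha => by simp at ha, fun x y hr => by simp [Rel] at hr,
      fun a b c ha => by simp at ha, fun x y hx => by simp at hx,
      fun c _ x y hx => by simp at hx⟩⟩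
  | succ N ih =>
    intro s hcard p d hinj hnc h3
    classical
    rcases s.eq_empty_or_nonempty with rfl | hne
    · exact ⟨id, ⟨fun a ha => by simp at ha, fun x y hr => by simp [Rel] at hr,
        fun a b c ha => by simp at ha, fun x y hx => by simp at hx,
        fun c _ x y hx => by simp at hx⟩⟩
    set M := s.max' hne with hMdef
    have hM : M ∈ s := s.max'_mem hne
    have hMax : ∀ x ∈ s, x ≤ M := fun x hx => s.le_max' x hx
    set L := s.filter (fun x => p x < p M) with hLdef
    set R := s.filter (fun x => p M < p x) with hRdef
    have hLsub : L ⊆ s := Finset.filter_subset _ _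
    have hRsub : R ⊆ s := Finset.filter_subset _ _
    have hLp : ∀ x ∈ L, p x < p M := fun x hx => (Finset.mem_filter.1 hx).2
    have hRp : ∀ x ∈ R, p M < p x := fun x hx => (Finset.mem_filter.1 hx).2
    have hMnotL : M ∉ L := fun hc => absurd (hLp M hc) (lt_irrefl _)
    have hMnotR : M ∉ R := fun hc => absurd (hRp M hc) (lt_irrefl _)
    have hLR_disj : ∀ x, x ∈ L → x ∈ R → False := fun x h1 h2 =>
      lt_asymm (hLp x h1) (hRp x h2)
    have htri : ∀ x ∈ s, x ∈ L ∨ x = M ∨ x ∈ R := by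
      intro x hx
      rcases lt_trichotomy (p x) (p M) with h | h | h
      · exact Or.inl (Finset.mem_filter.2 ⟨hx, h⟩)
      · exact Or.inr (Or.inl (hinj hx hM h))
      · exact Or.inr (Or.inr (Finset.mem_filter.2 ⟨hx, h⟩))
    have hLM : ∀ x ∈ L, x < M := by
      intro x hx
      rcases lt_or_eq_of_le (hMax x (hLsub hx)) with h | h
      · exact h
      · exact absurd (h ▸ hx) hMnotL
    have hRM : ∀ x ∈ R, x < M := by
      intro x hx
      rcases lt_or_eq_of_le (hMax x (hRsub hx)) with h | h
      · exact h
      · exact absurd (h ▸ hx) hMnotR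
    -- relation restriction lemmas
    have hrelL : ∀ x y, Rel L p x y ↔ (x ∈ L ∧ y ∈ L ∧ Rel s p x y) := by
      intro x y
      constructor
      · rintro ⟨hx, hy, h1, h2⟩
        refine ⟨hx, hy, hLsub hx, hLsub hy, h1, ?_⟩
        rcases h2 with h | ⟨z, hz, hz1, hz2, hz3, hz4⟩
        · exact Or.inl h
        · exact Or.inr ⟨z, hLsub hz, hz1, hz2, hz3, hz4⟩
      · rintro ⟨hx, hy, _, _, h1, h2⟩
        refine ⟨hx, hy, h1, ?_⟩
        rcases h2 with h | ⟨z, hz, hz1, hz2, hz3, hz4⟩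
        · exact Or.inl h
        · exact Or.inr ⟨z, Finset.mem_filter.2 ⟨hz, hz2.trans (hLp y hy)⟩, hz1, hz2, hz3, hz4⟩
    have hrelR : ∀ x y, Rel R p x y ↔ (x ∈ R ∧ y ∈ R ∧ Rel s p x y) := by
      intro x y
      constructor
      · rintro ⟨hx, hy, h1, h2⟩
        refine ⟨hx, hy, hRsub hx, hRsub hy, h1, ?_⟩
        rcases h2 with h | ⟨z, hz, hz1, hz2, hz3, hz4⟩
        · exact Or.inl h
        · exact Or.inr ⟨z, hRsub hz, hz1, hz2, hz3, hz4⟩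
      · rintro ⟨hx, hy, _, _, h1, h2⟩
        refine ⟨hx, hy, h1, ?_⟩
        rcases h2 with h | ⟨z, hz, hz1, hz2, hz3, hz4⟩
        · exact Or.inl h
        · exact Or.inr ⟨z, Finset.mem_filter.2 ⟨hz, (hRp x hx).trans hz1⟩, hz1, hz2, hz3, hz4⟩
    have hLRrel : ∀ x ∈ L, ∀ y ∈ R, Rel s p x y := by
      intro x hx y hy
      have hpxy : p x < p y := (hLp x hx).trans (hRp y hy)
      refine ⟨hLsub hx, hRsub hy, hpxy, ?_⟩
      rcases lt_trichotomy y x with h | h | h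
      · exact Or.inl h
      · exact absurd (h ▸ hpxy) (lt_irrefl _)
      · exact Or.inr ⟨M, hM, hLp x hx, hRp y hy, h, hRM y hy⟩
    have hMRrel : ∀ y ∈ R, Rel s p M y :=
      fun y hy => ⟨hM, hRsub hy, hRp y hy, Or.inl (hRM y hy)⟩
    have hnopredM : ∀ x, ¬ Rel s p x M := by
      rintro x ⟨hx, _, hpx, hcase⟩
      rcases hcase with h | ⟨z, hz, _, _, _, hz4⟩
      · exact absurd (hMax x hx) (not_le.2 h)
      · exact absurd (hMax z hz) (not_le.2 hz4)
    -- cards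
    have hcardL : L.card ≤ N := by
      have : L.card < s.card := Finset.card_lt_card ⟨hLsub, fun hss => hMnotL (hss hM)⟩
      omega
    have hcardR : R.card ≤ N := by
      have : R.card < s.card := Finset.card_lt_card ⟨hRsub, fun hss => hMnotR (hss hM)⟩
      omega
    -- the left threshold
    set dL := if hR : R.Nonempty then min d (R.min' hR) else d with hdLdef
    have hdL1 : dL ≤ d := by
      rw [hdLdef]; split <;> simp
    have hdL2 : ∀ a ∈ R, dL ≤ a := by
      intro a ha
      have hRne : R.Nonempty := ⟨a, ha⟩
      rw [hdLdef, dif_pos hRne]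
      exact le_trans (min_le_right _ _) (R.min'_le a ha)
    have hdLlt : ∀ x, dL < x → d < x ∨ (∃ r ∈ R, r < x) := by
      intro x hx
      rw [hdLdef] at hx
      by_cases hR : R.Nonempty
      · rw [dif_pos hR] at hx
        rcases min_lt_iff.1 hx with h | h
        · exact Or.inl h
        · exact Or.inr ⟨R.min' hR, R.min'_mem hR, h⟩
      · rw [dif_neg hR] at hx
        exact Or.inl hx
    -- recursive calls
    obtain ⟨qL, hqL⟩ : ∃ q, Good L p dL q := by
      apply ih L hcardL p dL (hinj.mono (Finset.coe_subset.2 hLsub))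
      · intro u v w h1 h2 hc
        exact hnc u v w ((hrelL u v).1 h1).2.2 ((hrelL v w).1 h2).2.2 hc
      · rintro x y hr ⟨hdx, hxy⟩
        obtain ⟨hxL, hyL, hrs⟩ := (hrelL x y).1 hr
        rcases hdLlt x hdx with h | ⟨r, hrR, hrx⟩
        · exact h3 x y hrs ⟨h, hxy⟩
        · exact hnc x y r hrs (hLRrel y hyL r hrR) ⟨hrx, hxy⟩
    obtain ⟨qR, hqR⟩ : ∃ q, Good R p d q := by
      apply ih R hcardR p d (hinj.mono (Finset.coe_subset.2 hRsub))
      · intro u v w h1 h2 hc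
        exact hnc u v w ((hrelR u v).1 h1).2.2 ((hrelR v w).1 h2).2.2 hc
      · intro x y hr
        exact h3 x y ((hrelR x y).1 hr).2.2
    -- Valid restriction lemmas
    have hValidL : ∀ c, Valid s p d c → Valid L p dL c := by
      rintro c ⟨hv1, hv2⟩
      constructor
      · intro u v hr
        exact hv1 u v ((hrelL v u).1 hr).2.2
      · rintro x y hx hy ⟨hdx, hxc, hcy⟩
        rcases hdLlt x hdx with h | ⟨r, hrR, hrx⟩
        · exact hv2 x y (hLsub hx) (hLsub hy) ⟨h, hxc, hcy⟩
        · exact hv1 r y (hLRrel y hy r hrR) ⟨le_trans hrx.le hxc, hcy⟩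
    have hValidR : ∀ c, Valid s p d c → Valid R p d c := by
      rintro c ⟨hv1, hv2⟩
      exact ⟨fun u v hr => hv1 u v ((hrelR v u).1 hr).2.2,
        fun x y hx hy => hv2 x y (hRsub hx) (hRsub hy)⟩
    -- the B set
    set B : ℕ → Prop := fun x => x ∈ L ∧ ∃ c, c < M ∧ Valid s p d c ∧ x ≤ c with hBdef
    have hBL : ∀ x, B x → x ∈ L := fun x hx => hx.1
    have hBM : ¬ B M := fun hc => hMnotL hc.1
    have hBnotR : ∀ x ∈ R, ¬ B x := fun x hx hc => hLR_disj x hc.1 hx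
    -- offsets
    set K := L.sup qL + 1 with hKdef
    have hqLK : ∀ x ∈ L, qL x < K := by
      intro x hx
      have := Finset.le_sup (f := qL) hx
      omega
    set q : ℕ → ℕ := fun x =>
      if B x then qL x else if x = M then K else if x ∈ L then K + 1 + qL x
      else 2 * K + 1 + qR x with hqdef
    have hqB : ∀ x, B x → q x = qL x := by
      intro x hx; simp only [hqdef, if_pos hx]
    have hqM : q M = K := by
      simp only [hqdef, if_neg hBM, if_pos rfl, if_true]
    have hqLnB : ∀ x ∈ L, ¬ B x → q x = K + 1 + qL x := by
      intro x hx hnB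
      simp only [hqdef, if_neg hnB, if_neg (ne_of_lt (hLM x hx)), if_pos hx]
    have hqR' : ∀ x ∈ R, q x = 2 * K + 1 + qR x := by
      intro x hx
      simp only [hqdef, if_neg (hBnotR x hx), if_neg (ne_of_lt (hRM x hx)),
        if_neg (fun hc => hLR_disj x hc hx)]
    -- bounds
    have hbB : ∀ x, B x → q x < K := by
      intro x hx; rw [hqB x hx]; exact hqLK x hx.1
    have hbLnB : ∀ x ∈ L, ¬ B x → K < q x ∧ q x ≤ 2 * K := by
      intro x hx hnB
      rw [hqLnB x hx hnB]
      have := hqLK x hx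
      omega
    have hbndR : ∀ x ∈ R, 2 * K < q x := by
      intro x hx; rw [hqR' x hx]; omega
    have hbndL : ∀ x ∈ L, q x ≤ 2 * K := by
      intro x hx
      by_cases hB : B x
      · have := hbB x hB; omega
      · exact (hbLnB x hx hB).2
    -- B downward closed
    have hBdown : ∀ x y, x ∈ L → B y → x ≤ y → B x := by
      rintro x y hx ⟨-, c, hc1, hc2, hc3⟩ hxy
      exact ⟨hx, c, hc1, hc2, le_trans hxy hc3⟩
    -- B vs a ∈ R with a < b contradiction
    have hBRcontra : ∀ b a, B b → a ∈ R → a < b → False := by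
      rintro b a ⟨-, c, hc1, hc2, hc3⟩ haR hab
      exact hc2.1 a M (hMRrel a haR) ⟨le_trans (le_of_lt hab) hc3, hc1⟩

    have hblockB : ∀ z, z ∈ s → q z < K → B z := by
      intro z hz hqz
      rcases htri z hz with hzL | hzM | hzR
      · by_cases hBz : B z
        · exact hBz
        · have := (hbLnB z hzL hBz).1; omega
      · subst hzM; rw [hqM] at hqz; omega
      · have := hbndR z hzR; omega
    have hinjq : Set.InjOn q s := by
      intro x hx y hy hqxy
      replace hx : x ∈ s := hx
      replace hy : y ∈ s := hy
      rcases htri x hx with hxL | hxM | hxR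
      · rcases htri y hy with hyL | hyM | hyR
        · by_cases hBx : B x <;> by_cases hBy : B y
          · exact hqL.inj (Finset.mem_coe.2 hBx.1) (Finset.mem_coe.2 hBy.1)
              (by rw [← hqB x hBx, ← hqB y hBy]; exact hqxy)
          · have h1 := hbB x hBx
            have h2 := (hbLnB y hyL hBy).1
            omega
          · have h1 := hbB y hBy
            have h2 := (hbLnB x hxL hBx).1
            omega
          · have e1 := hqLnB x hxL hBx
            have e2 := hqLnB y hyL hBy
            exact hqL.inj (Finset.mem_coe.2 hxL) (Finset.mem_coe.2 hyL) (by omega)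
        · subst hyM
          rw [hqM] at hqxy
          by_cases hBx : B x
          · have := hbB x hBx; omega
          · have := (hbLnB x hxL hBx).1; omega
        · have h1 := hbndL x hxL
          have h2 := hbndR y hyR
          omega
      · subst hxM
        rw [hqM] at hqxy
        rcases htri y hy with hyL | hyM | hyR
        · by_cases hBy : B y
          · have := hbB y hBy; omega
          · have := (hbLnB y hyL hBy).1; omega
        · exact hyM.symm
        · have := hbndR y hyR; omega
      · rcases htri y hy with hyL | hyM | hyR
        · have h1 := hbndL y hyL; have h2 := hbndR x hxR; omega
        · subst hyM; rw [hqM] at hqxy; have := hbndR x hxR; omega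
        · have e1 := hqR' x hxR
          have e2 := hqR' y hyR
          exact hqR.inj (Finset.mem_coe.2 hxR) (Finset.mem_coe.2 hyR) (by omega)
    have hextq : ∀ x y, Rel s p x y → q x < q y := by
      intro x y hr
      obtain ⟨hx, hy, hpxy, -⟩ := id hr
      rcases htri x hx with hxL | hxM | hxR
      · rcases htri y hy with hyL | hyM | hyR
        · have hLL : qL x < qL y := hqL.ext x y ((hrelL x y).2 ⟨hxL, hyL, hr⟩)
          by_cases hBx : B x <;> by_cases hBy : B y
          · rw [hqB x hBx, hqB y hBy]; exact hLL
          · have h1 := hbB x hBx; have h2 := (hbLnB y hyL hBy).1; omega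
          · exfalso
            obtain ⟨-, c, hc1, hc2, hc3⟩ := hBy
            have hxc : c < x := lt_of_not_ge (fun hxc => hBx ⟨hxL, c, hc1, hc2, hxc⟩)
            exact hc2.1 y x hr ⟨hc3, hxc⟩
          · rw [hqLnB x hxL hBx, hqLnB y hyL hBy]; omega
        · subst hyM; exact absurd hr (hnopredM x)
        · have h1 := hbndL x hxL; have h2 := hbndR y hyR; omega
      · subst hxM
        rcases htri y hy with hyL | hyM | hyR
        · exact absurd hpxy (not_lt.2 (le_of_lt (hLp y hyL)))
        · subst hyM; exact absurd hpxy (lt_irrefl _)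
        · rw [hqM, hqR' y hyR]; omega
      · rcases htri y hy with hyL | hyM | hyR
        · exact absurd hpxy (not_lt.2 (le_of_lt ((hLp y hyL).trans (hRp x hxR))))
        · subst hyM; exact absurd hr (hnopredM x)
        · rw [hqR' x hxR, hqR' y hyR]
          have := hqR.ext x y ((hrelR x y).2 ⟨hxR, hyR, hr⟩)
          omega
    have h231q : ∀ a b c, a ∈ s → b ∈ s → c ∈ s →
        q b < q c → q c < q a → a < b → b < c → False := by
      intro a b c ha hb hc hqbc hqca hab hbc
      rcases htri b hb with hbL | hbM | hbR
      · by_cases hBb : B b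
        · rcases htri a ha with haL | haM | haR
          · have hBa : B a := hBdown a b haL hBb hab.le
            have hqa := hbB a hBa
            have hBc : B c := hblockB c hc (by omega)
            have e1 := hqB a hBa; have e2 := hqB b hBb; have e3 := hqB c hBc
            exact hqL.no231 a b c hBa.1 hBb.1 hBc.1 (by omega) (by omega) hab hbc
          · subst haM; exact absurd (hMax b hb) (not_le.2 hab)
          · exact hBRcontra b a hBb haR hab
        · have hqb := hqLnB b hbL hBb
          have hqbK := (hbLnB b hbL hBb).1
          rcases htri c hc with hcL | hcM | hcR
          · by_cases hBc : B c
            · have := hbB c hBc; omega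
            · have hqc := hqLnB c hcL hBc
              rcases htri a ha with haL | haM | haR
              · by_cases hBa : B a
                · have := hbB a hBa; omega
                · have hqa := hqLnB a haL hBa
                  exact hqL.no231 a b c haL hbL hcL (by omega) (by omega) hab hbc
              · subst haM; rw [hqM] at hqca; omega
              · have hbdL : ¬ dL < b := by
                  intro hdb
                  have := hqL.dprop b c hbL hcL hdb hbc
                  omega
                have := hdL2 a haR
                omega
          · subst hcM; rw [hqM] at hqbc; omega
          · rcases htri a ha with haL | haM | haR
            · have := hbndL a haL; have := hbndR c hcR; omega
            · subst haM; rw [hqM] at hqca; have := hbndR c hcR; omega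
            · have hvRb : Valid R p d b := by
                constructor
                · rintro u v hr ⟨hub, hbv⟩
                  obtain ⟨hvR, huR, hrs⟩ := (hrelR v u).1 hr
                  have hub' : u < b := lt_of_le_of_ne hub (fun h => hLR_disj b hbL (h ▸ huR))
                  exact hnc b v u (hLRrel b hbL v hvR) hrs ⟨hub', hbv⟩
                · rintro x y hx hy ⟨hdx, hxb, hby⟩
                  have h5 := h3 b y (hLRrel b hbL y hy)
                  omega
              have := hqR.uprop b hvRb a c haR hcR hab.le hbc
              rw [hqR' a haR, hqR' c hcR] at hqca
              omega
      · subst hbM; exact absurd (hMax c hc) (not_le.2 hbc)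
      · rcases htri c hc with hcL | hcM | hcR
        · have := hbndL c hcL; have := hbndR b hbR; omega
        · subst hcM; rw [hqM] at hqbc; have := hbndR b hbR; omega
        · rcases htri a ha with haL | haM | haR
          · have := hbndL a haL; have := hbndR c hcR; omega
          · subst haM; rw [hqM] at hqca; have := hbndR c hcR; omega
          · have e1 := hqR' a haR; have e2 := hqR' b hbR; have e3 := hqR' c hcR
            exact hqR.no231 a b c haR hbR hcR (by omega) (by omega) hab hbc
    have hdq : ∀ x y, x ∈ s → y ∈ s → d < x → x < y → q y < q x := by
      intro x y hx hy hdx hxy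
      rcases htri y hy with hyL | hyM | hyR
      · rcases htri x hx with hxL | hxM | hxR
        · have hxnB : ¬ B x := by
            rintro ⟨-, c, hc1, hc2, hc3⟩
            exact hc2.2 x M hx hM ⟨hdx, hc3, hc1⟩
          have hynB : ¬ B y := by
            rintro ⟨-, c, hc1, hc2, hc3⟩
            exact hc2.2 x M hx hM ⟨hdx, le_trans hxy.le hc3, hc1⟩
          rw [hqLnB x hxL hxnB, hqLnB y hyL hynB]
          have := hqL.dprop x y hxL hyL (lt_of_le_of_lt hdL1 hdx) hxy
          omega
        · subst hxM; exact absurd (hMax y hy) (not_le.2 hxy)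
        · have := hbndL y hyL; have := hbndR x hxR; omega
      · subst hyM
        rw [hqM]
        rcases htri x hx with hxL | hxM | hxR
        · have hxnB : ¬ B x := by
            rintro ⟨-, c, hc1, hc2, hc3⟩
            exact hc2.2 x M hx hM ⟨hdx, hc3, hc1⟩
          exact (hbLnB x hxL hxnB).1
        · subst hxM; exact absurd hxy (lt_irrefl _)
        · have := hbndR x hxR; omega
      · rcases htri x hx with hxL | hxM | hxR
        · exact absurd ⟨hdx, hxy⟩ (h3 x y (hLRrel x hxL y hyR))
        · subst hxM; exact absurd (hMax y hy) (not_le.2 hxy)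
        · rw [hqR' x hxR, hqR' y hyR]
          have := hqR.dprop x y hxR hyR hdx hxy
          omega
    have huq : ∀ c, Valid s p d c → ∀ x y, x ∈ s → y ∈ s → x ≤ c → c < y → q x < q y := by
      intro c hv x y hx hy hxc hcy
      rcases htri x hx with hxL | hxM | hxR
      · rcases htri y hy with hyL | hyM | hyR
        · have hcM : c < M := lt_trans hcy (hLM y hyL)
          have hBx : B x := ⟨hxL, c, hcM, hv, hxc⟩
          by_cases hBy : B y
          · rw [hqB x hBx, hqB y hBy]
            exact hqL.uprop c (hValidL c hv) x y hxL hyL hxc hcy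
          · have := hbB x hBx; have := (hbLnB y hyL hBy).1; omega
        · subst hyM
          have hBx : B x := ⟨hxL, c, hcy, hv, hxc⟩
          rw [hqM]; exact hbB x hBx
        · have := hbndL x hxL; have := hbndR y hyR; omega
      · subst hxM
        have := hMax y hy
        omega
      · rcases htri y hy with hyL | hyM | hyR
        · exact absurd ⟨hxc, hcy⟩ (hv.1 x y (hLRrel y hyL x hxR))
        · subst hyM
          exact absurd ⟨hxc, hcy⟩ (hv.1 x M (hMRrel x hxR))
        · rw [hqR' x hxR, hqR' y hyR]
          have := hqR.uprop c (hValidR c hv) x y hxR hyR hxc hcy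
          omega
    exact ⟨q, hinjq, hextq, h231q, hdq, huq⟩

end NC231



/-- A permutation of length `n` (a bijection of `{0, …, n-1}`, identified with the
sequence of its values), packaged with its length. -/
abbrev PermSig : Type := Σ n : ℕ, Equiv.Perm (Fin n)

/-- Pattern containment: the permutation `α` of length `k` is contained in the
permutation `τ` of length `n` if there is an increasing choice of positions on which
`τ` is order-isomorphic to `α`. -/
def Contains {k n : ℕ} (α : Equiv.Perm (Fin k)) (τ : Equiv.Perm (Fin n)) : Prop :=
  ∃ f : Fin k ↪o Fin n, ∀ i j : Fin k, α i < α j ↔ τ (f i) < τ (f j)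

/-- The avoidance class `Av B`: all permutations containing no member of `B`. -/
def Av (B : Set PermSig) : Set PermSig :=
  {τ : PermSig | ∀ β ∈ B, ¬ Contains β.2 τ.2}

/-- A pattern class: a set of permutations downward closed under pattern containment. -/
def IsPatternClass (C : Set PermSig) : Prop :=
  ∀ (k n : ℕ) (α : Equiv.Perm (Fin k)) (τ : Equiv.Perm (Fin n)),
    Contains α τ → (⟨n, τ⟩ : PermSig) ∈ C → (⟨k, α⟩ : PermSig) ∈ C

/-- The base relation of the poset `P(τ)` on values: `x ≺ y` whenever `x` appears
before `y` in `τ` and either `x > y`, or some value `z` appears between `x` and `y`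
in `τ` with `x < y < z`. -/
def PQBase {n : ℕ} (τ : Equiv.Perm (Fin n)) (x y : Fin n) : Prop :=
  τ.symm x < τ.symm y ∧
    (y < x ∨ ∃ z : Fin n, τ.symm x < τ.symm z ∧ τ.symm z < τ.symm y ∧ x < y ∧ y < z)

/-- The poset `P(τ)`: the transitive closure of the base relation. -/
def PQ {n : ℕ} (τ : Equiv.Perm (Fin n)) : Fin n → Fin n → Prop :=
  Relation.TransGen (PQBase τ)

/-- `σ` is a linear extension of `P(τ)`; equivalently, `(σ, τ)` is an allowable pair,
i.e. a priority queue can produce output `τ` from input `σ`. -/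
def Allowable {n : ℕ} (σ τ : Equiv.Perm (Fin n)) : Prop :=
  ∀ x y : Fin n, PQ τ x y → σ.symm x < σ.symm y

/-- `C𝒜`: the set of permutations obtainable by a priority queue from an input in `C`. -/
def ImageA (C : Set PermSig) : Set PermSig :=
  {τ : PermSig | ∃ σ : Equiv.Perm (Fin τ.1), (⟨τ.1, σ⟩ : PermSig) ∈ C ∧ Allowable σ τ.2}

/-- `P(τ)` has an `α`-chain: values `a 0 ≺ a 1 ≺ … ≺ a (k-1)` forming a chain of
`P(τ)` whose pattern is `α`. -/
def HasChain {k n : ℕ} (α : Equiv.Perm (Fin k)) (τ : Equiv.Perm (Fin n)) : Prop :=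
  ∃ a : Fin k → Fin n,
    (∀ i j : Fin k, i < j → PQ τ (a i) (a j)) ∧
    (∀ i j : Fin k, a i < a j ↔ α i < α j)

/-- The pattern `231` (written 0-indexed). -/
noncomputable def p231 : Equiv.Perm (Fin 3) :=
  Equiv.ofBijective (![1, 2, 0] : Fin 3 → Fin 3) (by decide)

/-- If `P(τ)` contains no `231`-chain then it has a `231`-avoiding linear
extension. -/
theorem no_chain_231_linear_extension {n : ℕ} (τ : Equiv.Perm (Fin n)) (h : ¬ HasChain p231 τ) :
    ∃ σ : Equiv.Perm (Fin n), Allowable σ τ ∧ ¬ Contains p231 σ := by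

  classical
  set s : Finset ℕ := Finset.range n with hs
  set p : ℕ → ℕ := fun v => if h : v < n then ((τ.symm ⟨v, h⟩ : Fin n) : ℕ) else 0 with hp
  have hpval : ∀ x : Fin n, p (x : ℕ) = ((τ.symm x : Fin n) : ℕ) := by
    intro x; simp [hp, x.isLt]
  have hbase_trans : Transitive (PQBase τ) := by
    rintro x y w ⟨hxy, hcase1⟩ ⟨hyw, hcase2⟩
    refine ⟨hxy.trans hyw, ?_⟩
    rcases lt_trichotomy w x with hwx | rfl | hxw
    · exact Or.inl hwx
    · exact absurd (hxy.trans hyw) (lt_irrefl _)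
    · rcases hcase2 with hwy | ⟨z, hz1, hz2, hyw', hwz⟩
      · rcases hcase1 with hyx | ⟨z, hz1, hz2, hxy', hyz⟩
        · exact absurd (hwy.trans (hyx.trans hxw)) (lt_irrefl _)
        · exact Or.inr ⟨z, hz1, hz2.trans hyw, hxw, hwy.trans hyz⟩
      · exact Or.inr ⟨z, hxy.trans hz1, hz2, hxw, hwz⟩
  have hPQ : PQ τ = PQBase τ := by
    haveI : IsTrans (Fin n) (PQBase τ) := ⟨fun a b c => @hbase_trans a b c⟩
    exact Relation.transGen_eq_self
  have hrelIff : ∀ x y : Fin n, PQBase τ x y ↔ NC231.Rel s p (x : ℕ) (y : ℕ) := by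
    intro x y
    constructor
    · rintro ⟨h1, h2⟩
      refine ⟨Finset.mem_range.2 x.isLt, Finset.mem_range.2 y.isLt, ?_, ?_⟩
      · rw [hpval, hpval]; exact h1
      · rcases h2 with hyx | ⟨z, hz1, hz2, hxy, hyz⟩
        · exact Or.inl hyx
        · exact Or.inr ⟨(z : ℕ), Finset.mem_range.2 z.isLt, by rw [hpval, hpval]; exact hz1,
            by rw [hpval, hpval]; exact hz2, hxy, hyz⟩
    · rintro ⟨-, -, h1, h2⟩
      rw [hpval, hpval] at h1
      refine ⟨h1, ?_⟩
      rcases h2 with hyx | ⟨z, hz, hz1, hz2, hxy, hyz⟩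
      · exact Or.inl hyx
      · have hzlt : z < n := Finset.mem_range.1 hz
        have hz' : p z = ((τ.symm ⟨z, hzlt⟩ : Fin n) : ℕ) := hpval ⟨z, hzlt⟩
        rw [hpval, hz'] at hz1
        rw [hpval, hz'] at hz2
        exact Or.inr ⟨⟨z, hzlt⟩, hz1, hz2, hxy, hyz⟩
  have hpinj : Set.InjOn p s := by
    intro a ha b hb hab
    have ha' : a < n := Finset.mem_range.1 ha
    have hb' : b < n := Finset.mem_range.1 hb
    rw [hpval ⟨a, ha'⟩, hpval ⟨b, hb'⟩] at hab
    have h2 : τ.symm ⟨a, ha'⟩ = τ.symm ⟨b, hb'⟩ := Fin.val_injective hab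
    have h3 := τ.symm.injective h2
    exact congrArg Fin.val h3
  have hnc : NC231.NoChain s p := by
    rintro u v w h1 h2 ⟨hwu, huv⟩
    have hun : u < n := Finset.mem_range.1 h1.1
    have hvn : v < n := Finset.mem_range.1 h1.2.1
    have hwn : w < n := Finset.mem_range.1 h2.2.1
    have hUV : PQBase τ ⟨u, hun⟩ ⟨v, hvn⟩ := (hrelIff _ _).2 h1
    have hVW : PQBase τ ⟨v, hvn⟩ ⟨w, hwn⟩ := (hrelIff _ _).2 h2
    have hUW : PQBase τ ⟨u, hun⟩ ⟨w, hwn⟩ := hbase_trans hUV hVW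
    apply h
    refine ⟨![⟨u, hun⟩, ⟨v, hvn⟩, ⟨w, hwn⟩], ?_, ?_⟩
    · intro i j hij
      rw [hPQ]
      fin_cases i <;> fin_cases j <;>
        first
          | exact absurd hij (by decide)
          | exact hUV
          | exact hVW
          | exact hUW
    · intro i j
      have h231 : ∀ k : Fin 3, p231 k = ![1, 2, 0] k := fun k => rfl
      fin_cases i <;> fin_cases j <;>
        simp only [h231, Matrix.cons_val_zero, Matrix.cons_val_one, Matrix.head_cons,
          Matrix.cons_val_two, Matrix.tail_cons, Fin.mk_lt_mk, Fin.lt_def] <;>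
        simp <;> omega
  have h3 : ∀ x y, NC231.Rel s p x y → ¬(n < x ∧ x < y) := by
    rintro x y hr ⟨hnx, -⟩
    exact absurd (Finset.mem_range.1 hr.1) (not_lt.2 hnx.le)
  obtain ⟨q, hq⟩ := NC231.key s.card s le_rfl p n hpinj hnc h3
  set key' : Fin n → ℕ := fun i => q (i : ℕ) with hkey'
  have hkinj : Function.Injective key' := by
    intro a b hab
    exact Fin.val_injective (hq.inj (Finset.mem_range.2 a.isLt) (Finset.mem_range.2 b.isLt) hab)
  set σ : Equiv.Perm (Fin n) := Tuple.sort key' with hσ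
  have hsm : StrictMono (key' ∘ σ) :=
    (Tuple.monotone_sort key').strictMono_of_injective (hkinj.comp σ.injective)
  have happ : ∀ x : Fin n, (key' ∘ σ) (σ.symm x) = q (x : ℕ) := by
    intro x
    simp only [Function.comp_apply, Equiv.apply_symm_apply]
    rfl
  have hpos : ∀ x y : Fin n, q (x : ℕ) < q (y : ℕ) ↔ σ.symm x < σ.symm y := by
    intro x y
    constructor
    · intro hlt
      rcases lt_trichotomy (σ.symm x) (σ.symm y) with hc | hc | hc
      · exact hc
      · have hxy : q (x : ℕ) = q (y : ℕ) := by rw [← happ x, ← happ y, hc]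
        omega
      · have h4 := hsm hc
        rw [happ, happ] at h4
        omega
    · intro hlt
      have h4 := hsm hlt
      rw [happ, happ] at h4
      exact h4
  refine ⟨σ, ?_, ?_⟩
  · intro x y hpq
    rw [hPQ] at hpq
    exact (hpos x y).1 (hq.ext _ _ ((hrelIff x y).1 hpq))
  · rintro ⟨f, hf⟩
    have hf01 : σ (f 0) < σ (f 1) := (hf 0 1).1 (by decide)
    have hf20 : σ (f 2) < σ (f 0) := (hf 2 0).1 (by decide)
    have hq01 : q ((σ (f 0)) : ℕ) < q ((σ (f 1)) : ℕ) := by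
      apply (hpos _ _).2
      simp only [Equiv.symm_apply_apply]
      exact f.strictMono (by decide)
    have hq12 : q ((σ (f 1)) : ℕ) < q ((σ (f 2)) : ℕ) := by
      apply (hpos _ _).2
      simp only [Equiv.symm_apply_apply]
      exact f.strictMono (by decide)
    exact hq.no231 ((σ (f 2)) : ℕ) ((σ (f 0)) : ℕ) ((σ (f 1)) : ℕ)
      (Finset.mem_range.2 (σ (f 2)).isLt) (Finset.mem_range.2 (σ (f 0)).isLt)
      (Finset.mem_range.2 (σ (f 1)).isLt) hq01 hq12 hf20 hf01
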